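/- Let T > 0, n, m₂ ∈ ℕ, and let B₂ : [0,T] → ℝ^{n×m₂} and R₂ : [0,T] → Sym_{m₂}(ℝ) be continuously differentiable. Assume there exist δ > 0 and ν > 0 such that R₂(s) ⪰ δ·I and S(s) := B₂(s)R₂(s)⁻¹B₂(s)ᵀ ⪰ ν·I for all s ∈ [0,T]. Then the functions s ↦ S(s), s ↦ R(s) := S(s)^{1/2}, and s ↦ 𝒯(s) := R(s)⁻¹ are continuously differentiable on [0,T], and for every s ∈ [0,T] one has ‖R'(s)‖_F ≤ ‖S'(s)‖_F / (2√ν) and ‖𝒯'(s)‖_F ≤ ‖S'(s)‖_F / (2ν^{3/2}). -/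

import Mathlib

open Matrix

noncomputable section

/-- The Frobenius norm of a real matrix. -/
def fnorm {a b : ℕ} (M : Matrix (Fin a) (Fin b) ℝ) : ℝ :=
  Real.sqrt (∑ i, ∑ j, (M i j) ^ 2)

/-- `S(s) = B₂(s) R₂(s)⁻¹ B₂(s)ᵀ`. -/
def Sfun {n m2 : ℕ} (B₂ : ℝ → Matrix (Fin n) (Fin m2) ℝ)
    (R₂ : ℝ → Matrix (Fin m2) (Fin m2) ℝ) (s : ℝ) : Matrix (Fin n) (Fin n) ℝ :=
  B₂ s * (R₂ s)⁻¹ * (B₂ s)ᵀ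



section eig
variable {k : ℕ}

lemma fnorm_nonneg {a b : ℕ} (M : Matrix (Fin a) (Fin b) ℝ) : 0 ≤ fnorm M :=
  Real.sqrt_nonneg _

lemma fnorm_sq_eq_trace (M : Matrix (Fin k) (Fin k) ℝ) :
    ∑ i, ∑ j, (M i j)^2 = Matrix.trace (Mᵀ * M) := by
  rw [Matrix.trace]
  simp_rw [Matrix.diag_apply, Matrix.mul_apply, Matrix.transpose_apply, ← sq]
  rw [Finset.sum_comm]

lemma fnorm_conj {U V : Matrix (Fin k) (Fin k) ℝ} (M : Matrix (Fin k) (Fin k) ℝ)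
    (hVU : V * U = 1) (hVt : Vᵀ = U) :
    fnorm (U * M * V) = fnorm M := by
  have hUt : Uᵀ = V := by rw [← hVt, transpose_transpose]
  unfold fnorm
  congr 1
  rw [fnorm_sq_eq_trace, fnorm_sq_eq_trace]
  have h2 : (U * M * V)ᵀ * (U * M * V) = U * ((Mᵀ * M) * V) := by
    have hmid : V * (U * (M * V)) = M * V := by rw [← mul_assoc, hVU, one_mul]
    rw [transpose_mul, transpose_mul, hVt, hUt]
    simp only [mul_assoc]
    rw [hmid]
  rw [h2, trace_mul_comm, mul_assoc, hVU, mul_one]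

lemma fnorm_le_of_entries_le {M N : Matrix (Fin k) (Fin k) ℝ} {d : ℝ} (hd : 0 < d)
    (h : ∀ i j, |M i j| ≤ |N i j| / d) : fnorm M ≤ fnorm N / d := by
  have hsum : ∑ i, ∑ j, (M i j)^2 ≤ (∑ i, ∑ j, (N i j)^2) / d^2 := by
    rw [Finset.sum_div]
    refine Finset.sum_le_sum fun i _ => ?_
    rw [Finset.sum_div]
    refine Finset.sum_le_sum fun j _ => ?_
    calc (M i j)^2 = |M i j|^2 := (sq_abs _).symm
      _ ≤ (|N i j| / d)^2 := by
          apply pow_le_pow_left₀ (abs_nonneg _) (h i j)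
      _ = (N i j)^2 / d^2 := by rw [div_pow, sq_abs]
  calc fnorm M ≤ Real.sqrt ((∑ i, ∑ j, (N i j)^2) / d^2) := Real.sqrt_le_sqrt hsum
    _ = fnorm N / d := by
        rw [Real.sqrt_div (by positivity), Real.sqrt_sq hd.le, fnorm]

lemma sylvester_bounds {A : Matrix (Fin k) (Fin k) ℝ} {c : ℝ} (hc : 0 < c) (hA : A.PosSemidef)
    (heig : ∀ i, c ≤ hA.1.eigenvalues i) {X B : Matrix (Fin k) (Fin k) ℝ}
    (hsyl : A * X + X * A = B) :
    fnorm X ≤ fnorm B / (2 * c) ∧ fnorm (A⁻¹ * X * A⁻¹) ≤ fnorm B / (2 * c * c * c) := by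
  have hH := hA.1
  set U : Matrix (Fin k) (Fin k) ℝ := (hH.eigenvectorUnitary : Matrix (Fin k) (Fin k) ℝ) with hU
  set V : Matrix (Fin k) (Fin k) ℝ := star (hH.eigenvectorUnitary : Matrix (Fin k) (Fin k) ℝ) with hV
  set μ : Fin k → ℝ := hH.eigenvalues with hμ
  have hUV : U * V = 1 := (Matrix.mem_unitaryGroup_iff).mp hH.eigenvectorUnitary.2
  have hVU : V * U = 1 := (Matrix.mem_unitaryGroup_iff').mp hH.eigenvectorUnitary.2
  have hVt : Vᵀ = U := by
    rw [hV, hU, Matrix.star_eq_conjTranspose, conjTranspose_eq_transpose_of_trivial,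
      transpose_transpose]
  have hUt : Uᵀ = V := by rw [← hVt, transpose_transpose]
  have hspec : A = U * diagonal μ * V := by
    have h := hH.spectral_theorem
    simpa using h
  set Y : Matrix (Fin k) (Fin k) ℝ := V * X * U with hY
  set C : Matrix (Fin k) (Fin k) ℝ := V * B * U with hC
  have hXY : X = U * Y * V := by
    rw [hY, ← mul_assoc, ← mul_assoc, hUV, one_mul, mul_assoc, hUV, mul_one]
  have hBC : B = U * C * V := by
    rw [hC, ← mul_assoc, ← mul_assoc, hUV, one_mul, mul_assoc, hUV, mul_one]
  have hVA : V * A = diagonal μ * V := by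
    rw [hspec, ← mul_assoc, ← mul_assoc, hVU, one_mul]
  have hAU : A * U = U * diagonal μ := by
    rw [hspec, mul_assoc, hVU, mul_one]
  have hVA' : ∀ Z : Matrix (Fin k) (Fin k) ℝ, V * (A * Z) = diagonal μ * (V * Z) := by
    intro Z; rw [← mul_assoc, hVA, mul_assoc]
  have hDY : diagonal μ * Y + Y * diagonal μ = C := by
    have h1 : diagonal μ * Y = V * (A * X) * U := by
      rw [hY]; simp only [mul_assoc]; exact (hVA' (X * U)).symm
    have h2 : Y * diagonal μ = V * (X * A) * U := by
      rw [hY]; simp only [mul_assoc]; rw [← hAU]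
    rw [h1, h2, hC, ← hsyl, mul_add, add_mul]
  have hentry : ∀ i j, (μ i + μ j) * Y i j = C i j := by
    intro i j
    have := congrFun (congrFun hDY i) j
    simpa [Matrix.add_apply, Matrix.diagonal_mul, Matrix.mul_diagonal, add_mul, mul_comm] using this
  have hμc : ∀ i, c ≤ μ i := heig
  have hμpos : ∀ i, 0 < μ i := fun i => lt_of_lt_of_le hc (hμc i)
  have h2c : ∀ i j, 2 * c ≤ μ i + μ j := fun i j => by
    have := hμc i; have := hμc j; linarith
  have hYle : ∀ i j, |Y i j| ≤ |C i j| / (2 * c) := by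
    intro i j
    rw [le_div_iff₀ (by linarith)]
    calc |Y i j| * (2 * c) ≤ |Y i j| * (μ i + μ j) := by
          apply mul_le_mul_of_nonneg_left (h2c i j) (abs_nonneg _)
      _ = |(μ i + μ j) * Y i j| := by
          rw [abs_mul, abs_of_pos (show (0:ℝ) < μ i + μ j by
            have := hμpos i; have := hμpos j; linarith)]
          ring
      _ = |C i j| := by rw [hentry]
  have hfC : fnorm C = fnorm B := by rw [hBC, fnorm_conj _ hVU hVt]
  have hfY : fnorm X = fnorm Y := by rw [hXY, fnorm_conj _ hVU hVt]
  constructor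
  · rw [hfY, ← hfC]
    exact fnorm_le_of_entries_le (by linarith) hYle
  · -- inverse part
    have hDD : diagonal μ * diagonal (fun i => (μ i)⁻¹) = (1 : Matrix (Fin k) (Fin k) ℝ) := by
      have hμ1 : (fun i => μ i * (μ i)⁻¹) = (fun _ => (1:ℝ)) :=
        funext fun i => mul_inv_cancel₀ (hμpos i).ne'
      rw [diagonal_mul_diagonal, hμ1, diagonal_one]
    have hAinv : A⁻¹ = U * diagonal (fun i => (μ i)⁻¹) * V := by
      apply inv_eq_right_inv
      rw [hspec]
      calc U * diagonal μ * V * (U * diagonal (fun i => (μ i)⁻¹) * V)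
          = U * (diagonal μ * ((V * U) * (diagonal (fun i => (μ i)⁻¹) * V))) := by
            simp only [mul_assoc]
        _ = U * (diagonal μ * (diagonal (fun i => (μ i)⁻¹) * V)) := by rw [hVU, one_mul]
        _ = U * ((diagonal μ * diagonal (fun i => (μ i)⁻¹)) * V) := by simp only [mul_assoc]
        _ = U * V := by rw [hDD, one_mul]
        _ = 1 := hUV
    have hconj : A⁻¹ * X * A⁻¹ =
        U * (diagonal (fun i => (μ i)⁻¹) * Y * diagonal (fun i => (μ i)⁻¹)) * V := by
      have hcancel : ∀ Z : Matrix (Fin k) (Fin k) ℝ, V * (U * Z) = Z := by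
        intro Z; rw [← mul_assoc, hVU, one_mul]
      rw [hAinv, hXY]
      simp only [mul_assoc, hcancel]
    have hEntry2 : ∀ i j,
        |(diagonal (fun i => (μ i)⁻¹) * Y * diagonal (fun i => (μ i)⁻¹)) i j|
          ≤ |C i j| / (2 * c * c * c) := by
      intro i j
      have he : (diagonal (fun i => (μ i)⁻¹) * Y * diagonal (fun i => (μ i)⁻¹)) i j
          = (μ i)⁻¹ * Y i j * (μ j)⁻¹ := by
        rw [Matrix.mul_diagonal, Matrix.diagonal_mul]
      rw [he]
      have hiinv : (μ i)⁻¹ ≤ c⁻¹ := by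
        apply inv_anti₀ hc (hμc i)
      have hjinv : (μ j)⁻¹ ≤ c⁻¹ := by
        apply inv_anti₀ hc (hμc j)
      have hiinv0 : (0:ℝ) < (μ i)⁻¹ := inv_pos.mpr (hμpos i)
      have hjinv0 : (0:ℝ) < (μ j)⁻¹ := inv_pos.mpr (hμpos j)
      rw [abs_mul, abs_mul, abs_of_pos hiinv0, abs_of_pos hjinv0]
      calc (μ i)⁻¹ * |Y i j| * (μ j)⁻¹ ≤ c⁻¹ * (|C i j| / (2*c)) * c⁻¹ := by
            apply mul_le_mul
            apply mul_le_mul hiinv (hYle i j) (abs_nonneg _) (by positivity)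
            exact hjinv
            exact hjinv0.le
            positivity
        _ = |C i j| / (2 * c * c * c) := by
            simp only [div_eq_mul_inv, mul_inv]
            ring
    rw [hconj, fnorm_conj _ hVU hVt, ← hfC]
    exact fnorm_le_of_entries_le (by positivity) hEntry2

end eig


section eig2
variable {k : ℕ}

lemma eigvec_unit {A : Matrix (Fin k) (Fin k) ℝ} (hA : A.IsHermitian) (i : Fin k) :
    ⇑(hA.eigenvectorBasis i) ⬝ᵥ ⇑(hA.eigenvectorBasis i) = 1 := by
  have h1 : ‖hA.eigenvectorBasis i‖ = 1 := hA.eigenvectorBasis.orthonormal.1 i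
  have h2 := EuclideanSpace.norm_eq (hA.eigenvectorBasis i)
  rw [h1] at h2
  have h3 : ∑ j, ‖(hA.eigenvectorBasis i) j‖^2 = 1 := Real.sqrt_eq_one.mp h2.symm
  rw [dotProduct]
  calc ∑ j, (hA.eigenvectorBasis i) j * (hA.eigenvectorBasis i) j
      = ∑ j, ‖(hA.eigenvectorBasis i) j‖^2 := by
        refine Finset.sum_congr rfl fun j _ => ?_
        rw [Real.norm_eq_abs, sq_abs, sq]
    _ = 1 := h3

lemma psd_qf_nonneg {M : Matrix (Fin k) (Fin k) ℝ} (hM : M.PosSemidef) (v : Fin k → ℝ) :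
    0 ≤ v ⬝ᵥ (M *ᵥ v) := by
  simpa using hM.dotProduct_mulVec_nonneg v

lemma qf_sub_smul_one (M : Matrix (Fin k) (Fin k) ℝ) (c : ℝ) (v : Fin k → ℝ) :
    v ⬝ᵥ ((M - c • 1) *ᵥ v) = v ⬝ᵥ (M *ᵥ v) - c * (v ⬝ᵥ v) := by
  rw [sub_mulVec, dotProduct_sub, smul_mulVec, one_mulVec, dotProduct_smul]
  rfl

lemma eig_sq_ge {A S₀ : Matrix (Fin k) (Fin k) ℝ} {ν : ℝ} (hX : A.IsHermitian)
    (hsq : A * A = S₀) (hS : (S₀ - ν • 1).PosSemidef) (i : Fin k) :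
    ν ≤ (hX.eigenvalues i)^2 := by
  set v : Fin k → ℝ := ⇑(hX.eigenvectorBasis i) with hv
  have hmv : A *ᵥ v = hX.eigenvalues i • v := hX.mulVec_eigenvectorBasis i
  have hvv : v ⬝ᵥ v = 1 := eigvec_unit hX i
  have hSv : S₀ *ᵥ v = (hX.eigenvalues i)^2 • v := by
    rw [← hsq, ← mulVec_mulVec, hmv, mulVec_smul, hmv, smul_smul, sq]
  have h0 := psd_qf_nonneg hS v
  rw [qf_sub_smul_one, hSv, dotProduct_smul, hvv, smul_eq_mul, mul_one, mul_one] at h0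
  linarith

lemma hermitian_sub_smul_posSemidef {A : Matrix (Fin k) (Fin k) ℝ} (hA : A.IsHermitian)
    {c : ℝ} (h : ∀ i, c ≤ hA.eigenvalues i) : (A - c • 1).PosSemidef := by
  set U : Matrix (Fin k) (Fin k) ℝ := (hA.eigenvectorUnitary : Matrix (Fin k) (Fin k) ℝ) with hU
  have hUV : U * star U = 1 := (Matrix.mem_unitaryGroup_iff).mp hA.eigenvectorUnitary.2
  have hspec : A = U * diagonal hA.eigenvalues * star U := by
    have := hA.spectral_theorem
    simpa using this
  have hone : c • (1 : Matrix (Fin k) (Fin k) ℝ) = U * (c • 1) * star U := by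
    rw [mul_smul_comm, mul_one, smul_mul_assoc, hUV]
  have hd2 : diagonal hA.eigenvalues - c • (1 : Matrix (Fin k) (Fin k) ℝ)
      = diagonal (fun i => hA.eigenvalues i - c) := by
    rw [smul_one_eq_diagonal, diagonal_sub]
  have hdiff : U * (diagonal (fun i => hA.eigenvalues i - c)) * star U = A - c • 1 := by
    rw [← hd2, mul_sub, sub_mul, ← hspec, ← hone]
  rw [← hdiff]
  have hd : PosSemidef (diagonal (fun i => hA.eigenvalues i - c)) :=
    posSemidef_diagonal_iff.mpr fun i => by have := h i; simp; linarith
  have := hd.mul_mul_conjTranspose_same U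
  rwa [← Matrix.star_eq_conjTranspose] at this

lemma abs_qf_le_fnorm {M : Matrix (Fin k) (Fin k) ℝ} {v : Fin k → ℝ} (hv : v ⬝ᵥ v = 1) :
    |v ⬝ᵥ (M *ᵥ v)| ≤ fnorm M := by
  have hexp : v ⬝ᵥ (M *ᵥ v) = ∑ p : Fin k × Fin k, M p.1 p.2 * (v p.1 * v p.2) := by
    rw [Fintype.sum_prod_type, dotProduct]
    refine Finset.sum_congr rfl fun i _ => ?_
    rw [mulVec, dotProduct, Finset.mul_sum]
    refine Finset.sum_congr rfl fun j _ => ?_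
    ring
  have hcs := Finset.sum_mul_sq_le_sq_mul_sq Finset.univ
    (fun p : Fin k × Fin k => M p.1 p.2) (fun p => v p.1 * v p.2)
  have hg : ∑ p : Fin k × Fin k, (v p.1 * v p.2)^2 = 1 := by
    rw [Fintype.sum_prod_type]
    have : ∀ i, ∑ j, (v i * v j)^2 = (v i)^2 * ∑ j, (v j)^2 := by
      intro i
      rw [Finset.mul_sum]
      exact Finset.sum_congr rfl fun j _ => by ring
    simp_rw [this]
    rw [← Finset.sum_mul]
    have hvv : ∑ j, (v j)^2 = 1 := by
      rw [← hv, dotProduct]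
      exact Finset.sum_congr rfl fun j _ => pow_two (v j)
    rw [hvv, one_mul]
  have hf : ∑ p : Fin k × Fin k, (M p.1 p.2)^2 = ∑ i, ∑ j, (M i j)^2 :=
    Fintype.sum_prod_type _
  rw [hg, mul_one, hf] at hcs
  have h1 : |v ⬝ᵥ (M *ᵥ v)| = Real.sqrt ((v ⬝ᵥ (M *ᵥ v))^2) := (Real.sqrt_sq_eq_abs _).symm
  rw [h1, fnorm]
  apply Real.sqrt_le_sqrt
  rwa [hexp]

lemma fnorm_sub_comm (M N : Matrix (Fin k) (Fin k) ℝ) : fnorm (M - N) = fnorm (N - M) := by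
  unfold fnorm
  congr 1
  refine Finset.sum_congr rfl fun i _ => Finset.sum_congr rfl fun j _ => ?_
  have : (M - N) i j = -((N - M) i j) := by simp [Matrix.sub_apply]
  rw [this, neg_sq]

end eig2

section close
variable {k : ℕ}

lemma psd_of_close {R₀ X S₀ : Matrix (Fin k) (Fin k) ℝ} {ν : ℝ} (hν : 0 < ν)
    (hR₀ge : (R₀ - Real.sqrt ν • 1).PosSemidef)
    (hXh : X.IsHermitian) (hXsq : X * X = S₀) (hS : (S₀ - ν • 1).PosSemidef)
    (hclose : fnorm (X - R₀) < 2 * Real.sqrt ν) : X.PosSemidef := by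
  refine hXh.posSemidef_iff_eigenvalues_nonneg.mpr fun i => ?_
  show (0:ℝ) ≤ hXh.eigenvalues i
  by_contra hneg
  push_neg at hneg
  have hsq : ν ≤ (hXh.eigenvalues i)^2 := eig_sq_ge hXh hXsq hS i
  have hsν : Real.sqrt ν > 0 := Real.sqrt_pos.mpr hν
  have hμle : hXh.eigenvalues i ≤ -Real.sqrt ν := by
    nlinarith [Real.sq_sqrt hν.le]
  set v : Fin k → ℝ := ⇑(hXh.eigenvectorBasis i) with hvdef
  have hvv : v ⬝ᵥ v = 1 := eigvec_unit hXh i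
  have hXv : v ⬝ᵥ (X *ᵥ v) = hXh.eigenvalues i := by
    rw [hXh.mulVec_eigenvectorBasis i, dotProduct_smul, smul_eq_mul, hvv, mul_one]
  have hR₀v : Real.sqrt ν ≤ v ⬝ᵥ (R₀ *ᵥ v) := by
    have h0 := psd_qf_nonneg hR₀ge v
    rw [qf_sub_smul_one, hvv, mul_one] at h0
    linarith
  have hbig : 2 * Real.sqrt ν ≤ v ⬝ᵥ ((R₀ - X) *ᵥ v) := by
    rw [sub_mulVec, dotProduct_sub, hXv]
    linarith
  have habs := abs_qf_le_fnorm (M := R₀ - X) hvv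
  rw [fnorm_sub_comm] at habs
  have := le_abs_self (v ⬝ᵥ ((R₀ - X) *ᵥ v))
  linarith

end close

open scoped MatrixOrder in
lemma psd_sq_unique {k : ℕ} {X Y : Matrix (Fin k) (Fin k) ℝ} (hX : X.PosSemidef)
    (hY : Y.PosSemidef) (h : X * X = Y * Y) : X = Y :=
  (CFC.sq_eq_sq_iff X Y hX.nonneg hY.nonneg).mp (by rw [sq, sq, h])


section CALC
attribute [local instance] Matrix.frobeniusSeminormedAddCommGroup Matrix.frobeniusNormedAddCommGroup Matrix.frobeniusNormedSpace Matrix.frobeniusNormedRing Matrix.frobeniusNormedAlgebra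

attribute [local instance] Matrix.frobeniusSeminormedAddCommGroup Matrix.frobeniusNormedAddCommGroup Matrix.frobeniusNormedSpace Matrix.frobeniusNormedRing Matrix.frobeniusNormedAlgebra

lemma fnorm_eq_norm {a b : ℕ} (M : Matrix (Fin a) (Fin b) ℝ) : fnorm M = ‖M‖ := by
  rw [fnorm, Matrix.frobenius_norm_def, ← Real.sqrt_eq_rpow]
  congr 1
  simp [Real.rpow_two, sq_abs]

-- entry CLM
def entryCLM {a b : ℕ} (i : Fin a) (j : Fin b) : Matrix (Fin a) (Fin b) ℝ →L[ℝ] ℝ :=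
  LinearMap.toContinuousLinearMap
    { toFun := fun M => M i j
      map_add' := fun _ _ => rfl
      map_smul' := fun _ _ => rfl }

@[simp] lemma entryCLM_apply {a b : ℕ} (i : Fin a) (j : Fin b) (M : Matrix (Fin a) (Fin b) ℝ) :
    entryCLM i j M = M i j := rfl


lemma matrix_sum_smul {a b : ℕ} (M : Matrix (Fin a) (Fin b) ℝ) :
    ∑ i, ∑ j, M i j • Matrix.single i j (1:ℝ) = M := by
  ext i' j'
  simp only [Matrix.sum_apply, Matrix.single, Matrix.smul_apply, Matrix.of_apply,
    smul_eq_mul, mul_ite, mul_one, mul_zero]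
  simp [ite_and, Finset.sum_ite_eq']

section transfer
variable {a b : ℕ} {f : ℝ → Matrix (Fin a) (Fin b) ℝ} {f' : Matrix (Fin a) (Fin b) ℝ}
  {s : Set ℝ} {x : ℝ}

lemma hasDerivWithinAt_matrix_of_entries
    (h : ∀ i j, HasDerivWithinAt (fun t => f t i j) (f' i j) s x) :
    HasDerivWithinAt f f' s x := by
  have h1 : HasDerivWithinAt (fun t => ∑ i, ∑ j, f t i j • Matrix.single i j (1:ℝ))
      (∑ i : Fin a, ∑ j : Fin b, f' i j • Matrix.single i j (1:ℝ)) s x := by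
    refine HasDerivWithinAt.fun_sum fun i _ => HasDerivWithinAt.fun_sum fun j _ => ?_
    exact (h i j).smul_const _
  have e1 : (fun t => ∑ i, ∑ j, f t i j • Matrix.single i j (1:ℝ)) = f := by
    funext t
    exact matrix_sum_smul (f t)
  have e2 : (∑ i : Fin a, ∑ j : Fin b, f' i j • Matrix.single i j (1:ℝ)) = f' :=
    matrix_sum_smul f'
  rwa [e1, e2] at h1

lemma hasDerivWithinAt_entry_of_matrix
    (h : HasDerivWithinAt f f' s x) (i : Fin a) (j : Fin b) :
    HasDerivWithinAt (fun t => f t i j) (f' i j) s x :=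
  (entryCLM i j).hasFDerivAt.comp_hasDerivWithinAt x h

lemma contDiffOn_matrix_of_entries
    (h : ∀ i j, ContDiffOn ℝ 1 (fun t => f t i j) s) : ContDiffOn ℝ 1 f s := by
  have h1 : ContDiffOn ℝ 1 (fun t => ∑ i, ∑ j, f t i j • Matrix.single i j (1:ℝ)) s := by
    refine ContDiffOn.sum fun i _ => ContDiffOn.sum fun j _ => ?_
    exact (h i j).smul contDiffOn_const
  have e1 : (fun t => ∑ i, ∑ j, f t i j • Matrix.single i j (1:ℝ)) = f := by
    funext t
    exact matrix_sum_smul (f t)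
  rwa [e1] at h1

lemma continuousOn_entry_of_matrix
    (h : ContinuousOn f s) (i : Fin a) (j : Fin b) :
    ContinuousOn (fun t => f t i j) s :=
  (entryCLM i j).continuous.comp_continuousOn h

lemma contDiffOn_entry_of_matrix
    (h : ContDiffOn ℝ 1 f s) (i : Fin a) (j : Fin b) :
    ContDiffOn ℝ 1 (fun t => f t i j) s :=
  (entryCLM i j).contDiff.comp_contDiffOn h

end transfer

end CALC
section KEY
attribute [local instance] Matrix.frobeniusSeminormedAddCommGroup Matrix.frobeniusNormedAddCommGroup Matrix.frobeniusNormedSpace Matrix.frobeniusNormedRing Matrix.frobeniusNormedAlgebra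
variable {k : ℕ}

lemma fnorm_zero_imp {M : Matrix (Fin k) (Fin k) ℝ} (h : fnorm M ≤ 0) : M = 0 := by
  have h2 : ‖M‖ = 0 := le_antisymm (by rwa [← fnorm_eq_norm]) (norm_nonneg M)
  exact norm_eq_zero.mp h2

def sylLin (A : Matrix (Fin k) (Fin k) ℝ) :
    Matrix (Fin k) (Fin k) ℝ →ₗ[ℝ] Matrix (Fin k) (Fin k) ℝ where
  toFun X := A * X + X * A
  map_add' X Y := by noncomm_ring
  map_smul' c X := by
    simp [Matrix.mul_smul, Matrix.smul_mul, smul_add]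

lemma sylvester_inj {A : Matrix (Fin k) (Fin k) ℝ} {c : ℝ} (hc : 0 < c) (hA : A.PosSemidef)
    (heig : ∀ i, c ≤ hA.1.eigenvalues i) : Function.Injective (sylLin A) := by
  intro X Y hXY
  have h : A * X + X * A = A * Y + Y * A := hXY
  have h0 : A * (X - Y) + (X - Y) * A = 0 := by
    calc A * (X - Y) + (X - Y) * A = (A * X + X * A) - (A * Y + Y * A) := by noncomm_ring
      _ = 0 := by rw [h, sub_self]
  have hb := (sylvester_bounds hc hA heig h0).1
  have hz : fnorm (0 : Matrix (Fin k) (Fin k) ℝ) = 0 := by simp [fnorm]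
  rw [hz, zero_div] at hb
  have := fnorm_zero_imp hb
  exact sub_eq_zero.mp this

lemma key_local {I : Set ℝ} {ν : ℝ} (hν : 0 < ν)
    (S R : ℝ → Matrix (Fin k) (Fin k) ℝ)
    (hScd : ContDiffOn ℝ 1 S I)
    (hSsymm : ∀ s ∈ I, (S s).IsHermitian)
    (hSlb : ∀ s ∈ I, (S s - ν • (1 : Matrix (Fin k) (Fin k) ℝ)).PosSemidef)
    (hR : ∀ s ∈ I, (R s).PosSemidef ∧ R s * R s = S s)
    {s₀ : ℝ} (hs₀ : s₀ ∈ I) {Sd : Matrix (Fin k) (Fin k) ℝ}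
    (hSd : HasDerivWithinAt S Sd I s₀) :
    ContDiffWithinAt ℝ 1 R I s₀ ∧
    ContDiffWithinAt ℝ 1 (fun r => (R r)⁻¹) I s₀ ∧
    ∃ Rd, HasDerivWithinAt R Rd I s₀ ∧
      HasDerivWithinAt (fun r => (R r)⁻¹) (-((R s₀)⁻¹ * Rd * (R s₀)⁻¹)) I s₀ ∧
      R s₀ * Rd + Rd * R s₀ = Sd := by
  classical
  obtain ⟨hApsd, hAsq⟩ := hR s₀ hs₀
  have hc : 0 < Real.sqrt ν := Real.sqrt_pos.mpr hν
  have heig : ∀ i, Real.sqrt ν ≤ hApsd.1.eigenvalues i := by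
    intro i
    have h1 : ν ≤ (hApsd.1.eigenvalues i)^2 := eig_sq_ge hApsd.1 hAsq (hSlb s₀ hs₀) i
    have h2 : 0 ≤ hApsd.1.eigenvalues i := hApsd.eigenvalues_nonneg i
    calc Real.sqrt ν ≤ Real.sqrt ((hApsd.1.eigenvalues i)^2) := Real.sqrt_le_sqrt h1
      _ = hApsd.1.eigenvalues i := by rw [Real.sqrt_sq h2]
  have hinj : Function.Injective (sylLin (R s₀)) := sylvester_inj hc hApsd heig
  let Φ : Matrix (Fin k) (Fin k) ℝ ≃L[ℝ] Matrix (Fin k) (Fin k) ℝ :=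
    (LinearEquiv.ofBijective (sylLin (R s₀))
      ⟨hinj, LinearMap.surjective_of_injective hinj⟩).toContinuousLinearEquiv
  have hΦ : ∀ Z, Φ Z = R s₀ * Z + Z * R s₀ := fun Z => rfl
  set g : Matrix (Fin k) (Fin k) ℝ → Matrix (Fin k) (Fin k) ℝ := fun X => X * X with hgdef
  have hstrict : HasStrictFDerivAt g (Φ : Matrix (Fin k) (Fin k) ℝ →L[ℝ] _) (R s₀) := by
    have h := (hasStrictFDerivAt_id (𝕜 := ℝ) (R s₀)).mul' (hasStrictFDerivAt_id (R s₀))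
    exact h.congr_fderiv (ContinuousLinearMap.ext fun Z => by
      show _ = R s₀ * Z + Z * R s₀
      rfl)
  set LI := hstrict.localInverse g Φ (R s₀) with hLIdef
  have hLIA : LI (g (R s₀)) = R s₀ := hstrict.localInverse_apply_image
  have hgA : g (R s₀) = S s₀ := hAsq
  have hgsm : ContDiffAt ℝ 1 g (R s₀) := (contDiff_id.mul contDiff_id).contDiffAt
  have hLIcd : ContDiffAt ℝ 1 LI (g (R s₀)) :=
    hgsm.to_localInverse hstrict.hasFDerivAt one_ne_zero
  obtain ⟨ρ, hρ0, hball⟩ := Metric.mem_nhds_iff.mp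
    ((hstrict.toOpenPartialHomeomorph g).open_source.mem_nhds hstrict.mem_toOpenPartialHomeomorph_source)
  set ε := min ρ (Real.sqrt ν) with hεdef
  have hε0 : 0 < ε := lt_min hρ0 hc
  have hScont : ContinuousWithinAt S I s₀ := hScd.continuousOn s₀ hs₀
  have hScont' : Filter.Tendsto S (nhdsWithin s₀ I) (nhds (g (R s₀))) := by
    rw [hgA]; exact hScont
  have htend : Filter.Tendsto (fun r => LI (S r)) (nhdsWithin s₀ I) (nhds (R s₀)) := by
    rw [← hLIA]
    exact hstrict.localInverse_continuousAt.tendsto.comp hScont'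
  have hev1 : ∀ᶠ r in nhdsWithin s₀ I, dist (LI (S r)) (R s₀) < ε :=
    htend (Metric.ball_mem_nhds _ hε0)
  have hev2 : ∀ᶠ r in nhdsWithin s₀ I, g (LI (S r)) = S r :=
    hScont'.eventually hstrict.eventually_right_inverse
  have hev3 : ∀ᶠ r in nhdsWithin s₀ I, r ∈ I := eventually_mem_nhdsWithin
  have hAt : (R s₀)ᵀ = R s₀ := by
    have h := hApsd.1
    rwa [IsHermitian, conjTranspose_eq_transpose_of_trivial] at h
  have hAge : (R s₀ - Real.sqrt ν • 1).PosSemidef := hermitian_sub_smul_posSemidef hApsd.1 heig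
  have heq : ∀ᶠ r in nhdsWithin s₀ I, R r = LI (S r) := by
    filter_upwards [hev1, hev2, hev3] with r h1 h2 hrI
    set X := LI (S r) with hXdef
    have hXsq : X * X = S r := h2
    have hXnorm : ‖X - R s₀‖ < ε := by rwa [dist_eq_norm] at h1
    have hXt_norm : ‖Xᵀ - R s₀‖ < ε := by
      have h3 : Xᵀ - R s₀ = (X - R s₀)ᵀ := by rw [transpose_sub, hAt]
      rw [h3, Matrix.frobenius_norm_transpose]
      exact hXnorm
    have hXmem : X ∈ (hstrict.toOpenPartialHomeomorph g).source := by
      apply hball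
      rw [Metric.mem_ball, dist_eq_norm]
      exact lt_of_lt_of_le hXnorm (min_le_left _ _)
    have hXtmem : Xᵀ ∈ (hstrict.toOpenPartialHomeomorph g).source := by
      apply hball
      rw [Metric.mem_ball, dist_eq_norm]
      exact lt_of_lt_of_le hXt_norm (min_le_left _ _)
    have hSrt : (S r)ᵀ = S r := by
      have h4 := hSsymm r hrI
      rwa [IsHermitian, conjTranspose_eq_transpose_of_trivial] at h4
    have hgXt : g Xᵀ = g X := by
      show Xᵀ * Xᵀ = X * X
      rw [← transpose_mul, hXsq, hSrt, ← hXsq]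
    have hXXt : Xᵀ = X := (hstrict.toOpenPartialHomeomorph g).injOn hXtmem hXmem hgXt
    have hXh : X.IsHermitian := by
      rw [IsHermitian, conjTranspose_eq_transpose_of_trivial]
      exact hXXt
    have hclose : fnorm (X - R s₀) < 2 * Real.sqrt ν := by
      rw [fnorm_eq_norm]
      calc ‖X - R s₀‖ < ε := hXnorm
        _ ≤ Real.sqrt ν := min_le_right _ _
        _ < 2 * Real.sqrt ν := by linarith
    have hXpsd : X.PosSemidef := psd_of_close hν hAge hXh hXsq (hSlb r hrI) hclose
    have hSr : (S r).PosSemidef := by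
      have h5 := posSemidef_conjTranspose_mul_self (R r)
      rw [(hR r hrI).1.1, (hR r hrI).2] at h5
      exact h5
    exact psd_sq_unique (hR r hrI).1 hXpsd ((hR r hrI).2.trans hXsq.symm)
  have hRA : R s₀ = LI (S s₀) := by rw [← hgA, hLIA]
  have hLIcd' : ContDiffAt ℝ 1 LI (S s₀) := by rw [← hgA]; exact hLIcd
  have hcd1 : ContDiffWithinAt ℝ 1 R I s₀ := by
    have hcomp : ContDiffWithinAt ℝ 1 (fun r => LI (S r)) I s₀ :=
      hLIcd'.comp_contDiffWithinAt s₀ (hScd s₀ hs₀)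
    exact hcomp.congr_of_eventuallyEq heq hRA
  have hLIfd : HasFDerivAt LI ((Φ.symm : Matrix (Fin k) (Fin k) ℝ ≃L[ℝ] _) :
      Matrix (Fin k) (Fin k) ℝ →L[ℝ] _) (S s₀) := by
    have h6 := hstrict.to_localInverse.hasFDerivAt
    rwa [hgA] at h6
  have hRd' : HasDerivWithinAt (fun r => LI (S r)) (Φ.symm Sd) I s₀ :=
    hLIfd.comp_hasDerivWithinAt s₀ hSd
  have hRd : HasDerivWithinAt R (Φ.symm Sd) I s₀ := hRd'.congr_of_eventuallyEq heq hRA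
  have heqn : R s₀ * (Φ.symm Sd) + (Φ.symm Sd) * R s₀ = Sd := by
    conv_rhs => rw [← Φ.apply_symm_apply Sd]
    exact (hΦ _).symm
  have hAposdef : (R s₀).PosDef := by
    have h1 : PosDef (Real.sqrt ν • (1 : Matrix (Fin k) (Fin k) ℝ)) := by
      rw [smul_one_eq_diagonal]
      exact posDef_diagonal_iff.mpr fun i => hc
    have h2 := Matrix.PosDef.posSemidef_add hAge h1
    rwa [sub_add_cancel] at h2
  have hu : IsUnit (R s₀) := hAposdef.isUnit
  have huc : (hu.unit : Matrix (Fin k) (Fin k) ℝ) = R s₀ := hu.unit_spec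
  have hinv_eq : ∀ r, (R r)⁻¹ = Ring.inverse (R r) := fun r =>
    Matrix.nonsing_inv_eq_ringInverse _
  have hinvcd : ContDiffWithinAt ℝ 1 (fun r => (R r)⁻¹) I s₀ := by
    have h1 : ContDiffAt ℝ 1 (Ring.inverse : Matrix (Fin k) (Fin k) ℝ → _) (R s₀) := by
      have h7 := contDiffAt_ringInverse ℝ (n := 1) hu.unit
      rwa [huc] at h7
    have h2 : ContDiffWithinAt ℝ 1 (fun r => Ring.inverse (R r)) I s₀ :=
      h1.comp_contDiffWithinAt s₀ hcd1
    exact h2.congr (fun r _ => hinv_eq r) (hinv_eq s₀)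
  have hinvd : HasDerivWithinAt (fun r => (R r)⁻¹)
      (-((R s₀)⁻¹ * (Φ.symm Sd) * (R s₀)⁻¹)) I s₀ := by
    have h1 : HasFDerivAt (Ring.inverse : Matrix (Fin k) (Fin k) ℝ → _)
        (-(ContinuousLinearMap.mulLeftRight ℝ _ (↑hu.unit⁻¹) (↑hu.unit⁻¹))) (R s₀) := by
      have h7 := hasFDerivAt_ringInverse (𝕜 := ℝ) hu.unit
      rwa [huc] at h7
    have h2 := h1.comp_hasDerivWithinAt s₀ hRd
    have h3 : (-(ContinuousLinearMap.mulLeftRight ℝ _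
        ((↑hu.unit⁻¹ : Matrix (Fin k) (Fin k) ℝ)) (↑hu.unit⁻¹))) (Φ.symm Sd)
        = -((R s₀)⁻¹ * (Φ.symm Sd) * (R s₀)⁻¹) := by
      have hui : ((hu.unit⁻¹ : (Matrix (Fin k) (Fin k) ℝ)ˣ) : Matrix (Fin k) (Fin k) ℝ)
          = (R s₀)⁻¹ := by
        rw [Matrix.coe_units_inv, huc]
      rw [ContinuousLinearMap.neg_apply, ContinuousLinearMap.mulLeftRight_apply, hui]
    rw [h3] at h2
    exact h2.congr (fun r _ => hinv_eq r) (hinv_eq s₀)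
  exact ⟨hcd1, hinvcd, Φ.symm Sd, hRd, hinvd, heqn⟩

end KEY
section MAIN
attribute [local instance] Matrix.frobeniusSeminormedAddCommGroup Matrix.frobeniusNormedAddCommGroup Matrix.frobeniusNormedSpace Matrix.frobeniusNormedRing Matrix.frobeniusNormedAlgebra
variable {k : ℕ}

lemma fnorm_neg (M : Matrix (Fin k) (Fin k) ℝ) : fnorm (-M) = fnorm M := by
  unfold fnorm
  congr 1
  refine Finset.sum_congr rfl fun i _ => Finset.sum_congr rfl fun j _ => ?_
  rw [Matrix.neg_apply, neg_sq]

lemma posDef_of_ge {A : Matrix (Fin k) (Fin k) ℝ} {δ : ℝ} (hδ : 0 < δ)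
    (h : (A - δ • 1).PosSemidef) : A.PosDef := by
  have h1 : PosDef (δ • (1 : Matrix (Fin k) (Fin k) ℝ)) := by
    rw [smul_one_eq_diagonal]
    exact posDef_diagonal_iff.mpr fun i => hδ
  have h2 := Matrix.PosDef.posSemidef_add h h1
  rwa [sub_add_cancel] at h2

lemma eig_sqrt_lb {A S₀ : Matrix (Fin k) (Fin k) ℝ} {ν : ℝ} (hν : 0 < ν)
    (hA : A.PosSemidef) (hsq : A * A = S₀)
    (hS : (S₀ - ν • (1 : Matrix (Fin k) (Fin k) ℝ)).PosSemidef) (i : Fin k) :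
    Real.sqrt ν ≤ hA.1.eigenvalues i := by
  have h1 : ν ≤ (hA.1.eigenvalues i)^2 := eig_sq_ge hA.1 hsq hS i
  have h2 : 0 ≤ hA.1.eigenvalues i := hA.eigenvalues_nonneg i
  calc Real.sqrt ν ≤ Real.sqrt ((hA.1.eigenvalues i)^2) := Real.sqrt_le_sqrt h1
    _ = hA.1.eigenvalues i := by rw [Real.sqrt_sq h2]

lemma contDiffOn_matrix_inv {I : Set ℝ} {F : ℝ → Matrix (Fin k) (Fin k) ℝ}
    (hF : ContDiffOn ℝ 1 F I) (hU : ∀ s ∈ I, IsUnit (F s)) :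
    ContDiffOn ℝ 1 (fun s => (F s)⁻¹) I := by
  intro s hs
  have hu := hU s hs
  have h1 : ContDiffAt ℝ 1 (Ring.inverse : Matrix (Fin k) (Fin k) ℝ → _) (F s) := by
    have h := contDiffAt_ringInverse ℝ (n := 1) hu.unit
    rwa [hu.unit_spec] at h
  have h2 := h1.comp_contDiffWithinAt s (hF s hs)
  exact h2.congr (fun r _ => Matrix.nonsing_inv_eq_ringInverse _)
    (Matrix.nonsing_inv_eq_ringInverse _)

/-- matrix-valued derivWithin (with the Frobenius norm instances). -/
def matDerivWithin {a b : ℕ} (f : ℝ → Matrix (Fin a) (Fin b) ℝ) (I : Set ℝ) (s : ℝ) :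
    Matrix (Fin a) (Fin b) ℝ :=
  derivWithin f I s

lemma matDeriv_spec {a b : ℕ} {f : ℝ → Matrix (Fin a) (Fin b) ℝ}
    {f' : Matrix (Fin a) (Fin b) ℝ} {I : Set ℝ} {s : ℝ}
    (hI : UniqueDiffOn ℝ I) (hs : s ∈ I) (h : HasDerivWithinAt f f' I s) :
    matDerivWithin f I s = f' :=
  h.derivWithin (hI s hs)

lemma continuousOn_matDeriv_entries {a b : ℕ} {f : ℝ → Matrix (Fin a) (Fin b) ℝ} {I : Set ℝ}
    (hI : UniqueDiffOn ℝ I) (hf : ContDiffOn ℝ 1 f I) (i : Fin a) (j : Fin b) :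
    ContinuousOn (fun s => matDerivWithin f I s i j) I :=
  continuousOn_entry_of_matrix (hf.continuousOn_derivWithin hI le_rfl) i j


/-- If `B₂` and `R₂` are continuously differentiable with `R₂ ⪰ δI` and
`S := B₂R₂⁻¹B₂ᵀ ⪰ νI` on `[0,T]`, then `S`, its positive semidefinite square root
`R = S^{1/2}`, and `𝒯 = R⁻¹` are continuously differentiable on `[0,T]`, with
`‖R'(s)‖_F ≤ ‖S'(s)‖_F/(2√ν)` and `‖𝒯'(s)‖_F ≤ ‖S'(s)‖_F/(2ν^{3/2})`. -/
theorem stmt_4 (n m2 : ℕ) (T δ ν : ℝ) (hT : 0 < T) (hδ : 0 < δ) (hν : 0 < ν)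
    (B₂ : ℝ → Matrix (Fin n) (Fin m2) ℝ) (R₂ : ℝ → Matrix (Fin m2) (Fin m2) ℝ)
    (hB₂ : ∀ i j, ContDiffOn ℝ 1 (fun s => B₂ s i j) (Set.Icc 0 T))
    (hR₂ : ∀ i j, ContDiffOn ℝ 1 (fun s => R₂ s i j) (Set.Icc 0 T))
    (hR₂symm : ∀ s ∈ Set.Icc (0 : ℝ) T, (R₂ s).IsSymm)
    (hR₂pos : ∀ s ∈ Set.Icc (0 : ℝ) T,
      (R₂ s - δ • (1 : Matrix (Fin m2) (Fin m2) ℝ)).PosSemidef)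
    (hS : ∀ s ∈ Set.Icc (0 : ℝ) T,
      (Sfun B₂ R₂ s - ν • (1 : Matrix (Fin n) (Fin n) ℝ)).PosSemidef)
    (R : ℝ → Matrix (Fin n) (Fin n) ℝ)
    (hR : ∀ s ∈ Set.Icc (0 : ℝ) T, (R s).PosSemidef ∧ R s * R s = Sfun B₂ R₂ s) :
    ∃ S' R' T' : ℝ → Matrix (Fin n) (Fin n) ℝ,
      (∀ i j, ContinuousOn (fun s => S' s i j) (Set.Icc 0 T)) ∧
      (∀ i j, ContinuousOn (fun s => R' s i j) (Set.Icc 0 T)) ∧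
      (∀ i j, ContinuousOn (fun s => T' s i j) (Set.Icc 0 T)) ∧
      (∀ s ∈ Set.Icc (0 : ℝ) T, ∀ i j,
        HasDerivWithinAt (fun r => Sfun B₂ R₂ r i j) (S' s i j) (Set.Icc 0 T) s ∧
        HasDerivWithinAt (fun r => R r i j) (R' s i j) (Set.Icc 0 T) s ∧
        HasDerivWithinAt (fun r => (R r)⁻¹ i j) (T' s i j) (Set.Icc 0 T) s) ∧
      (∀ s ∈ Set.Icc (0 : ℝ) T,
        fnorm (R' s) ≤ fnorm (S' s) / (2 * Real.sqrt ν) ∧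
        fnorm (T' s) ≤ fnorm (S' s) / (2 * ν * Real.sqrt ν)) := by
  have hIu : UniqueDiffOn ℝ (Set.Icc (0:ℝ) T) := uniqueDiffOn_Icc hT
  -- inverse of R₂ is C¹ (matrix level)
  have hR₂mat : ContDiffOn ℝ 1 R₂ (Set.Icc 0 T) := contDiffOn_matrix_of_entries hR₂
  have hR₂unit : ∀ s ∈ Set.Icc (0:ℝ) T, IsUnit (R₂ s) := fun s hs =>
    (posDef_of_ge hδ (hR₂pos s hs)).isUnit
  have hRinv : ContDiffOn ℝ 1 (fun s => (R₂ s)⁻¹) (Set.Icc 0 T) :=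
    contDiffOn_matrix_inv hR₂mat hR₂unit
  -- entries of S are C¹
  have hSentry : ∀ i j, ContDiffOn ℝ 1 (fun s => Sfun B₂ R₂ s i j) (Set.Icc 0 T) := by
    intro i j
    have hrw : (fun s => Sfun B₂ R₂ s i j)
        = fun s => ∑ k2, (∑ l, B₂ s i l * (R₂ s)⁻¹ l k2) * B₂ s j k2 := by
      funext s
      simp [Sfun, Matrix.mul_apply, Matrix.transpose_apply]
    rw [hrw]
    refine ContDiffOn.sum fun k2 _ => ContDiffOn.mul ?_ (hB₂ j k2)
    exact ContDiffOn.sum fun l _ => (hB₂ i l).mul (contDiffOn_entry_of_matrix hRinv l k2)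
  have hSmat : ContDiffOn ℝ 1 (Sfun B₂ R₂) (Set.Icc 0 T) :=
    contDiffOn_matrix_of_entries hSentry
  -- S symmetric
  have hSsymm : ∀ s ∈ Set.Icc (0:ℝ) T, (Sfun B₂ R₂ s).IsHermitian := by
    intro s hs
    rw [Matrix.IsHermitian, Matrix.conjTranspose_eq_transpose_of_trivial, Sfun,
      Matrix.transpose_mul, Matrix.transpose_mul, Matrix.transpose_transpose,
      Matrix.transpose_nonsing_inv, hR₂symm s hs, ← Matrix.mul_assoc]
  -- entrywise derivative of S
  set Sd : ℝ → Matrix (Fin n) (Fin n) ℝ :=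
    fun s => Matrix.of fun i j => derivWithin (fun r => Sfun B₂ R₂ r i j) (Set.Icc 0 T) s
    with hSddef
  have hSdentry : ∀ s ∈ Set.Icc (0:ℝ) T, ∀ i j,
      HasDerivWithinAt (fun r => Sfun B₂ R₂ r i j) (Sd s i j) (Set.Icc 0 T) s := by
    intro s hs i j
    exact ((hSentry i j).differentiableOn one_ne_zero s hs).hasDerivWithinAt
  have hSdspec : ∀ s ∈ Set.Icc (0:ℝ) T,
      HasDerivWithinAt (Sfun B₂ R₂) (Sd s) (Set.Icc 0 T) s := fun s hs =>
    hasDerivWithinAt_matrix_of_entries (fun i j => hSdentry s hs i j)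
  -- key local facts
  have hkey := fun (s : ℝ) (hs : s ∈ Set.Icc (0:ℝ) T) =>
    key_local hν (Sfun B₂ R₂) R hSmat hSsymm hS hR hs (hSdspec s hs)
  have hRcd : ContDiffOn ℝ 1 R (Set.Icc 0 T) := fun s hs => (hkey s hs).1
  have hRinvcd : ContDiffOn ℝ 1 (fun r => (R r)⁻¹) (Set.Icc 0 T) := fun s hs => (hkey s hs).2.1
  set Rd := matDerivWithin R (Set.Icc 0 T) with hRddef
  set Td := matDerivWithin (fun r => (R r)⁻¹) (Set.Icc 0 T) with hTddef
  have hRdspec : ∀ s ∈ Set.Icc (0:ℝ) T,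
      HasDerivWithinAt R (Rd s) (Set.Icc 0 T) s ∧
      HasDerivWithinAt (fun r => (R r)⁻¹) (Td s) (Set.Icc 0 T) s ∧
      R s * Rd s + Rd s * R s = Sd s ∧
      Td s = -((R s)⁻¹ * Rd s * (R s)⁻¹) := by
    intro s hs
    obtain ⟨_, _, Rd0, h1, h2, h3⟩ := hkey s hs
    have e1 : Rd s = Rd0 := matDeriv_spec hIu hs h1
    have e2 : Td s = -((R s)⁻¹ * Rd0 * (R s)⁻¹) := matDeriv_spec hIu hs h2
    refine ⟨e1 ▸ h1, e2 ▸ h2, ?_, ?_⟩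
    · rw [e1]; exact h3
    · rw [e1]; exact e2
  refine ⟨Sd, Rd, Td, ?_, ?_, ?_, ?_, ?_⟩
  · intro i j
    exact (hSentry i j).continuousOn_derivWithin hIu le_rfl
  · intro i j
    exact continuousOn_matDeriv_entries hIu hRcd i j
  · intro i j
    exact continuousOn_matDeriv_entries hIu hRinvcd i j
  · intro s hs i j
    refine ⟨hSdentry s hs i j, ?_, ?_⟩
    · exact hasDerivWithinAt_entry_of_matrix (hRdspec s hs).1 i j
    · exact hasDerivWithinAt_entry_of_matrix (hRdspec s hs).2.1 i j
  · intro s hs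
    obtain ⟨hpsd, hsq⟩ := hR s hs
    have heig := fun i => eig_sqrt_lb hν hpsd hsq (hS s hs) i
    have hc : 0 < Real.sqrt ν := Real.sqrt_pos.mpr hν
    have hb := sylvester_bounds hc hpsd heig (hRdspec s hs).2.2.1
    constructor
    · exact hb.1
    · have h2 := hb.2
      rw [(hRdspec s hs).2.2.2, fnorm_neg]
      have hrw : 2 * Real.sqrt ν * Real.sqrt ν * Real.sqrt ν = 2 * ν * Real.sqrt ν := by
        rw [show 2 * Real.sqrt ν * Real.sqrt ν * Real.sqrt ν
            = 2 * (Real.sqrt ν * Real.sqrt ν) * Real.sqrt ν by ring,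
          Real.mul_self_sqrt hν.le]
      rw [← hrw]
      exact h2

end MAIN
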